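/- Let f : ℝⁿ → ℝ be differentiable and μ-strongly star-convex with constant μ ≥ 0 and global minimizer ω* ∈ ℝⁿ. Then for all λ ∈ [0,1] and all ω ∈ ℝⁿ, setting ω̃ = (1−λ)ω* + λω, it holds that f(ω̃) ≤ (1−λ)f(ω*) + λf(ω) − (λ(1−λ)μ/2)‖ω* − ω‖². -/

import Mathlib

open RealInnerProductSpace

/-- Lemma 1 (Eq. 8) direction: strong star-convexity (gradient form) implies the
strongly star-convex secant inequality. -/
theorem strong_star_convex_imp_eq8 {n : ℕ} (f : EuclideanSpace ℝ (Fin n) → ℝ) (μ : ℝ)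
    (hμ : 0 ≤ μ) (hdiff : Differentiable ℝ f) (ωs : EuclideanSpace ℝ (Fin n))
    (hmin : ∀ ω, f ωs ≤ f ω)
    (hssc : ∀ ω : EuclideanSpace ℝ (Fin n),
      f ω + ⟪gradient f ω, ωs - ω⟫ + μ / 2 * ‖ωs - ω‖ ^ 2 ≤ f ωs) :
    ∀ lam : ℝ, lam ∈ Set.Icc (0 : ℝ) 1 → ∀ ω : EuclideanSpace ℝ (Fin n),
      f ((1 - lam) • ωs + lam • ω)
        ≤ (1 - lam) * f ωs + lam * f ω - lam * (1 - lam) * μ / 2 * ‖ωs - ω‖ ^ 2 := by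
  rintro lam ⟨hl0, hl1⟩ ω
  rcases eq_or_lt_of_le hl0 with rfl | hl0'
  · simp
  set v := ω - ωs with hv
  set d := ‖ωs - ω‖ with hd
  set h : ℝ → ℝ := fun t => f (ωs + t • v) with hh
  -- derivative of h
  have hderiv : ∀ t : ℝ, HasDerivAt h (⟪gradient f (ωs + t • v), v⟫) t := by
    intro t
    have hline : HasDerivAt (fun t : ℝ => ωs + t • v) v t := by
      simpa using ((hasDerivAt_id t).smul_const v).const_add ωs
    have hg := (hdiff (ωs + t • v)).hasGradientAt
    have := hg.hasFDerivAt.comp_hasDerivAt t hline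
    rw [InnerProductSpace.toDual_apply_apply] at this
    exact this
  -- key inequality from hssc
  have hkey : ∀ t : ℝ, 0 ≤ t →
      h t - f ωs + μ * t ^ 2 * d ^ 2 / 2 ≤ t * ⟪gradient f (ωs + t • v), v⟫ := by
    intro t ht
    have := hssc (ωs + t • v)
    have h1 : ωs - (ωs + t • v) = (-t) • v := by
      simp only [hv]
      module
    rw [h1] at this
    have h2 : ⟪gradient f (ωs + t • v), (-t) • v⟫ = -t * ⟪gradient f (ωs + t • v), v⟫ :=
      real_inner_smul_right _ _ _
    have h3 : ‖(-t) • v‖ ^ 2 = t ^ 2 * d ^ 2 := by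
      rw [norm_smul]
      have : ‖v‖ = d := by rw [hv, hd, norm_sub_rev]
      rw [this]
      simp [abs_of_nonneg ht]
      ring
    rw [h2, h3] at this
    nlinarith [this]
  set ψ : ℝ → ℝ := fun t => (h t - f ωs) / t - μ * d ^ 2 / 2 * t with hψ
  have hψd : ∀ t : ℝ, 0 < t →
      HasDerivAt ψ ((⟪gradient f (ωs + t • v), v⟫ * t - (h t - f ωs)) / t ^ 2 - μ * d ^ 2 / 2) t := by
    intro t ht
    have h1 : HasDerivAt (fun t => h t - f ωs) (⟪gradient f (ωs + t • v), v⟫) t :=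
      (hderiv t).sub_const _
    have h2 : HasDerivAt (fun t : ℝ => t) 1 t := hasDerivAt_id t
    have h3 := h1.div h2 (ne_of_gt ht)
    have h4 : HasDerivAt (fun t : ℝ => μ * d ^ 2 / 2 * t) (μ * d ^ 2 / 2) t := by
      simpa using (hasDerivAt_id t).const_mul (μ * d ^ 2 / 2)
    have h5 := h3.sub h4
    rw [mul_one] at h5
    exact h5
  have hmono : MonotoneOn ψ (Set.Icc lam 1) := by
    apply monotoneOn_of_deriv_nonneg (convex_Icc lam 1)
    · intro t ht
      exact ((hψd t (lt_of_lt_of_le hl0' ht.1)).continuousAt).continuousWithinAt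
    · intro t ht
      rw [interior_Icc] at ht
      exact ((hψd t (lt_trans hl0' ht.1)).differentiableAt).differentiableWithinAt
    · intro t ht
      rw [interior_Icc] at ht
      have ht0 : 0 < t := lt_trans hl0' ht.1
      rw [(hψd t ht0).deriv]
      have := hkey t ht0.le
      have ht2 : 0 < t ^ 2 := by positivity
      rw [sub_nonneg, div_le_div_iff₀ (by positivity) ht2] at *
      nlinarith [this]
  have hle : ψ lam ≤ ψ 1 := hmono ⟨le_refl lam, hl1⟩ ⟨hl1, le_refl 1⟩ hl1
  have hψ1 : ψ 1 = f ω - f ωs - μ * d ^ 2 / 2 := by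
    simp [hψ, hh, hv]
  have hψlam : ψ lam = (h lam - f ωs) / lam - μ * d ^ 2 / 2 * lam := rfl
  have hpt : ωs + lam • v = (1 - lam) • ωs + lam • ω := by
    simp [hv]; module
  rw [hψ1, hψlam] at hle
  have : (h lam - f ωs) / lam ≤ f ω - f ωs - μ * d ^ 2 / 2 + μ * d ^ 2 / 2 * lam := by linarith
  rw [div_le_iff₀ hl0'] at this
  have hfl : f ((1 - lam) • ωs + lam • ω) = h lam := by rw [hh]; simp [hpt]
  rw [hfl]
  nlinarith [this]
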